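/- Fix B > 0 and κ₀ > 0, and let μ₁,…,μ_n ∈ ℝ satisfy: (L1) −B < min_i μ_i < 0 and 0 < max_i μ_i < B; (L2) |μ̄| ≤ σ̄² · m_B / φ(B), where μ̄ = (1/n)Σ_i μ_i, σ̄² = (1/n)Σ_i (μ_i − μ̄)², and m_B = inf_{t ∈ [B, 3B]} t·φ(t); (L3) (1/n)Σ_i μ_i² > κ₀/φ(3B). Let W(β) = (1/n) Σ_{i=1}^n μ_i Φ(μ_i − β). Then: W has a global maximizer β* ∈ [−2B, 2B] with W(β*) > 0 which is its unique local (and global) maximizer; W''(β*) < −κ₀; and there exists ξ > 0, depending only on B and κ₀, such that sup_{|β − β*| > κ₀/B} W(β) < W(β*) − ξ. -/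

import Mathlib

open MeasureTheory

/-- standard normal density -/
noncomputable def phiR (x : ℝ) : ℝ := (Real.sqrt (2 * Real.pi))⁻¹ * Real.exp (-(x ^ 2) / 2)

/-- standard normal CDF -/
noncomputable def PhiR (x : ℝ) : ℝ := ∫ t in Set.Iic x, phiR t

/-- compound welfare of the threshold rule `1{Y_i ≥ β}` in the homoskedastic
unit-variance zero-cost case -/
noncomputable def Wn (n : ℕ) (μ : Fin n → ℝ) (β : ℝ) : ℝ :=
  (1 / (n:ℝ)) * ∑ i, μ i * PhiR (μ i - β)

open Set Filter Topology



lemma phiR_pos (x : ℝ) : 0 < phiR x := by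
  have : (0:ℝ) < Real.sqrt (2 * Real.pi) := Real.sqrt_pos.2 (by positivity)
  exact mul_pos (inv_pos.2 this) (Real.exp_pos _)

lemma continuous_phiR : Continuous phiR := by
  unfold phiR; fun_prop

lemma integrable_phiR : Integrable phiR := by
  have h := integrable_exp_neg_mul_sq (b := (1/2 : ℝ)) (by norm_num)
  have : phiR = fun x => (Real.sqrt (2 * Real.pi))⁻¹ * Real.exp (-(1/2) * x ^ 2) := by
    funext x; unfold phiR; ring_nf
  rw [this]
  exact h.const_mul _

lemma hasDerivAt_phiR (x : ℝ) : HasDerivAt phiR (-x * phiR x) x := by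
  have h1 : HasDerivAt (fun x : ℝ => -(x ^ 2) / 2) (-x) x := by
    have := ((hasDerivAt_pow 2 x).neg).div_const 2
    simpa using this.congr_deriv (by ring)
  have h2 := (Real.hasDerivAt_exp (-(x ^ 2) / 2)).comp x h1
  have h3 := h2.const_mul (Real.sqrt (2 * Real.pi))⁻¹
  unfold phiR
  exact h3.congr_deriv (by ring)

lemma hasDerivAt_PhiR (x : ℝ) : HasDerivAt PhiR (phiR x) x := by
  have key : ∀ y : ℝ, PhiR y = PhiR 0 + ∫ t in (0:ℝ)..y, phiR t := by
    intro y
    have := intervalIntegral.integral_Iic_sub_Iic (f := phiR) (μ := volume) (a := 0) (b := y)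
      integrable_phiR.integrableOn integrable_phiR.integrableOn
    unfold PhiR
    linarith [this]
  have h : HasDerivAt (fun y => PhiR 0 + ∫ t in (0:ℝ)..y, phiR t) (phiR x) x := by
    have := intervalIntegral.integral_hasDerivAt_right (a := 0) (b := x)
      (integrable_phiR.intervalIntegrable)
      (continuous_phiR.stronglyMeasurableAtFilter _ _)
      continuous_phiR.continuousAt
    exact this.const_add (PhiR 0)
  have : PhiR = fun y => PhiR 0 + ∫ t in (0:ℝ)..y, phiR t := funext key
  rw [this]
  exact h

lemma PhiR_nonneg (x : ℝ) : 0 ≤ PhiR x :=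
  setIntegral_nonneg measurableSet_Iic (fun t _ => (phiR_pos t).le)

lemma strictMono_PhiR : StrictMono PhiR :=
  strictMono_of_deriv_pos (fun x => by rw [(hasDerivAt_PhiR x).deriv]; exact phiR_pos x)

lemma PhiR_le_exp {x : ℝ} (hx : x ≤ -2) :
    PhiR x ≤ (Real.sqrt (2 * Real.pi))⁻¹ * Real.exp x := by
  have hc : (0:ℝ) < (Real.sqrt (2 * Real.pi))⁻¹ := by
    have : (0:ℝ) < Real.sqrt (2 * Real.pi) := Real.sqrt_pos.2 (by positivity)
    exact inv_pos.2 this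
  have h1 : PhiR x ≤ ∫ t in Set.Iic x, (Real.sqrt (2 * Real.pi))⁻¹ * Real.exp t := by
    apply setIntegral_mono_on integrable_phiR.integrableOn
      (((integrableOn_exp_Iic x)).const_mul _) measurableSet_Iic
    intro t ht
    simp only [Set.mem_Iic] at ht
    have ht2 : t ≤ -2 := ht.trans hx
    unfold phiR
    have : -(t ^ 2) / 2 ≤ t := by nlinarith
    exact mul_le_mul_of_nonneg_left (Real.exp_le_exp.2 this) hc.le
  calc PhiR x ≤ _ := h1
    _ = (Real.sqrt (2 * Real.pi))⁻¹ * Real.exp x := by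
        rw [integral_const_mul, integral_exp_Iic]

noncomputable def Sfun (n : ℕ) (μ : Fin n → ℝ) (β : ℝ) : ℝ :=
  ∑ i, μ i * Real.exp (μ i * β - μ i ^ 2 / 2)

lemma phiR_sub (a β : ℝ) : phiR (a - β) =
    (Real.sqrt (2 * Real.pi))⁻¹ * (Real.exp (-(β ^ 2) / 2) * Real.exp (a * β - a ^ 2 / 2)) := by
  unfold phiR
  rw [← Real.exp_add]
  congr 2
  ring

lemma hasDerivAt_Sfun (n : ℕ) (μ : Fin n → ℝ) (β : ℝ) :
    HasDerivAt (Sfun n μ) (∑ i, μ i ^ 2 * Real.exp (μ i * β - μ i ^ 2 / 2)) β := by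
  have h : ∀ i : Fin n, HasDerivAt (fun β => μ i * Real.exp (μ i * β - μ i ^ 2 / 2))
      (μ i ^ 2 * Real.exp (μ i * β - μ i ^ 2 / 2)) β := by
    intro i
    have hlin : HasDerivAt (fun β : ℝ => μ i * β - μ i ^ 2 / 2) (μ i) β := by
      simpa using ((hasDerivAt_id β).const_mul (μ i)).sub_const (μ i ^ 2 / 2)
    have := ((Real.hasDerivAt_exp (μ i * β - μ i ^ 2 / 2)).comp β hlin).const_mul (μ i)
    exact this.congr_deriv (by ring)
  have := HasDerivAt.fun_sum (u := Finset.univ) (fun i _ => h i)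
  exact this

lemma sum_phiR_eq (n : ℕ) (μ : Fin n → ℝ) (β : ℝ) :
    ∑ i, μ i * phiR (μ i - β) =
      (Real.sqrt (2 * Real.pi))⁻¹ * Real.exp (-(β ^ 2) / 2) * Sfun n μ β := by
  unfold Sfun
  rw [Finset.mul_sum]
  apply Finset.sum_congr rfl
  intro i _
  rw [phiR_sub]
  ring

noncomputable def W1 (n : ℕ) (μ : Fin n → ℝ) (β : ℝ) : ℝ :=
  -((1 / (n:ℝ)) * ∑ i, μ i * phiR (μ i - β))

lemma hasDerivAt_Wn (n : ℕ) (μ : Fin n → ℝ) (β : ℝ) :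
    HasDerivAt (Wn n μ) (W1 n μ β) β := by
  have h : ∀ i : Fin n, HasDerivAt (fun β => μ i * PhiR (μ i - β))
      (-(μ i * phiR (μ i - β))) β := by
    intro i
    have hlin : HasDerivAt (fun β : ℝ => μ i - β) (-1) β := by
      simpa using (hasDerivAt_const β (μ i)).fun_sub (hasDerivAt_id β)
    have := ((hasDerivAt_PhiR (μ i - β)).comp β hlin).const_mul (μ i)
    exact this.congr_deriv (by ring)
  have := (HasDerivAt.fun_sum (u := Finset.univ) (fun i _ => h i)).const_mul (1 / (n:ℝ))
  have h2 : HasDerivAt (Wn n μ) ((1 / (n:ℝ)) * ∑ i, -(μ i * phiR (μ i - β))) β := this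
  convert h2 using 1
  unfold W1
  rw [Finset.sum_neg_distrib]
  ring

lemma hasDerivAt_W1 (n : ℕ) (μ : Fin n → ℝ) (β : ℝ) :
    HasDerivAt (W1 n μ) (-((1 / (n:ℝ)) * ∑ i, μ i * ((μ i - β) * phiR (μ i - β)))) β := by
  have h : ∀ i : Fin n, HasDerivAt (fun β => μ i * phiR (μ i - β))
      (μ i * ((μ i - β) * phiR (μ i - β))) β := by
    intro i
    have hlin : HasDerivAt (fun β : ℝ => μ i - β) (-1) β := by
      simpa using (hasDerivAt_const β (μ i)).fun_sub (hasDerivAt_id β)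
    have := ((hasDerivAt_phiR (μ i - β)).comp β hlin).const_mul (μ i)
    exact this.congr_deriv (by ring)
  have := ((HasDerivAt.fun_sum (u := Finset.univ) (fun i _ => h i)).const_mul (1 / (n:ℝ))).fun_neg
  exact this

lemma deriv_Wn (n : ℕ) (μ : Fin n → ℝ) : deriv (Wn n μ) = W1 n μ := by
  funext β
  exact (hasDerivAt_Wn n μ β).deriv

lemma W1_eq (n : ℕ) (μ : Fin n → ℝ) (β : ℝ) :
    W1 n μ β = -((1 / (n:ℝ)) * ((Real.sqrt (2 * Real.pi))⁻¹ * Real.exp (-(β ^ 2) / 2)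
      * Sfun n μ β)) := by
  unfold W1
  rw [sum_phiR_eq]

lemma phiR_neg_arg (x : ℝ) : phiR (-x) = phiR x := by unfold phiR; ring_nf

lemma phiR_le_phiR {x y : ℝ} (h : |y| ≤ |x|) : phiR x ≤ phiR y := by
  unfold phiR
  have h2 : y ^ 2 ≤ x ^ 2 := by
    nlinarith [sq_abs x, sq_abs y, abs_nonneg y, abs_nonneg x, h]
  have : (0:ℝ) < (Real.sqrt (2 * Real.pi))⁻¹ :=
    inv_pos.2 (Real.sqrt_pos.2 (by positivity))
  exact mul_le_mul_of_nonneg_left (Real.exp_le_exp.2 (by linarith)) this.le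

lemma cheb (n : ℕ) (hn : 0 < n) (μ : Fin n → ℝ) (B m : ℝ) (hB : 0 < B)
    (h1 : ∀ i, |μ i| ≤ B)
    (hm : ∀ t ∈ Set.Icc B (3 * B), m ≤ t * phiR t)
    (hL2 : |∑ i, μ i| * phiR B ≤ (∑ i, (μ i - (1 / (n:ℝ)) * ∑ j, μ j) ^ 2) * m) :
    0 ≤ ∑ i, μ i * phiR (μ i - 2 * B) := by
  have hn' : (0:ℝ) < n := Nat.cast_pos.2 hn
  set μb := (1 / (n:ℝ)) * ∑ j, μ j with hμb
  have hsummu : ∑ j, μ j = n * μb := by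
    rw [hμb]; field_simp
  have hμbB : |μb| ≤ B := by
    rw [hμb, abs_mul]
    have h2 : |∑ j, μ j| ≤ ∑ j, |μ j| := Finset.abs_sum_le_sum_abs _ _
    have h3 : ∑ j : Fin n, |μ j| ≤ ∑ _j : Fin n, B := Finset.sum_le_sum (fun j _ => h1 j)
    have h4 : (∑ _j : Fin n, B : ℝ) = n * B := by
      rw [Finset.sum_const, Finset.card_univ, Fintype.card_fin]; ring
    rw [abs_of_pos (by positivity : (0:ℝ) < 1 / (n:ℝ))]
    rw [div_mul_eq_mul_div, one_mul, div_le_iff₀ hn']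
    calc |∑ j, μ j| ≤ n * B := by linarith
      _ = B * n := by ring
  set p : ℝ → ℝ := fun t => phiR (t - 2 * B) with hp
  have hpd : ∀ t : ℝ, HasDerivAt p ((2 * B - t) * phiR (t - 2 * B)) t := by
    intro t
    have hlin : HasDerivAt (fun t : ℝ => t - 2 * B) 1 t := by
      simpa using (hasDerivAt_id t).sub_const (2 * B)
    have := (hasDerivAt_phiR (t - 2 * B)).comp t hlin
    exact this.congr_deriv (by ring)
  have hmono : MonotoneOn (fun t => p t - m * t) (Set.Icc (-B) B) := by
    apply monotoneOn_of_deriv_nonneg (convex_Icc _ _)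
    · exact ((continuous_phiR.comp (continuous_id.sub continuous_const)).sub (continuous_const.mul continuous_id)).continuousOn
    · intro x _
      exact ((hpd x).sub ((hasDerivAt_id x).const_mul m)).differentiableAt.differentiableWithinAt
    · intro x hx
      rw [interior_Icc] at hx
      have hd : deriv (fun t => p t - m * t) x = (2 * B - x) * phiR (x - 2 * B) - m := by
        have := ((hpd x).fun_sub (by simpa using (hasDerivAt_id x).const_mul m)).deriv
        simpa using this
      rw [hd]
      have h2Bx : 2 * B - x ∈ Set.Icc B (3 * B) := by
        constructor <;> [linarith [hx.2]; linarith [hx.1]]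
      have := hm _ h2Bx
      have heq : phiR (x - 2 * B) = phiR (2 * B - x) := by
        rw [show x - 2 * B = -(2 * B - x) by ring, phiR_neg_arg]
      rw [heq]
      linarith
  have key : ∀ a ∈ Set.Icc (-B) B, ∀ b ∈ Set.Icc (-B) B, b ≤ a →
      m * (a - b) ≤ p a - p b := by
    intro a ha b hb hba
    have := hmono hb ha hba
    simp only at this
    linarith
  have hμb_mem : μb ∈ Set.Icc (-B) B := by
    rw [Set.mem_Icc]; constructor <;> [linarith [neg_abs_le μb]; linarith [le_abs_self μb]]
  have hμ_mem : ∀ i, μ i ∈ Set.Icc (-B) B := by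
    intro i; rw [Set.mem_Icc]
    exact ⟨neg_le_of_abs_le (h1 i), le_of_abs_le (h1 i)⟩
  have hterm : ∀ i, m * (μ i - μb) ^ 2 ≤ (μ i - μb) * (p (μ i) - p μb) := by
    intro i
    rcases le_total μb (μ i) with h | h
    · have := key (μ i) (hμ_mem i) μb hμb_mem h
      nlinarith
    · have := key μb hμb_mem (μ i) (hμ_mem i) h
      nlinarith
  have hsum : m * ∑ i, (μ i - μb) ^ 2 ≤ ∑ i, (μ i - μb) * (p (μ i) - p μb) := by
    rw [Finset.mul_sum]
    exact Finset.sum_le_sum (fun i _ => hterm i)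
  have expand : ∑ i, (μ i - μb) * (p (μ i) - p μb) =
      (∑ i, μ i * p (μ i)) - μb * ∑ i, p (μ i) := by
    have h1' : ∀ i : Fin n, (μ i - μb) * (p (μ i) - p μb) =
        (μ i * p (μ i) - μb * p (μ i)) - (μ i * p μb - μb * p μb) := fun i => by ring
    rw [Finset.sum_congr rfl (fun i _ => h1' i), Finset.sum_sub_distrib,
      Finset.sum_sub_distrib, Finset.sum_sub_distrib, ← Finset.mul_sum,
      ← Finset.sum_mul, Finset.sum_const, Finset.card_univ, Fintype.card_fin,
      hsummu]
    simp only [nsmul_eq_mul]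
    ring
  have hpbound : ∀ i, 0 < p (μ i) ∧ p (μ i) ≤ phiR B := by
    intro i
    refine ⟨phiR_pos _, ?_⟩
    apply phiR_le_phiR
    rw [abs_of_pos hB, abs_of_nonpos (by linarith [le_abs_self (μ i), h1 i])]
    linarith [le_abs_self (μ i), h1 i]
  have hsump_nonneg : 0 ≤ ∑ i, p (μ i) :=
    Finset.sum_nonneg (fun i _ => (hpbound i).1.le)
  have hsump_le : ∑ i, p (μ i) ≤ n * phiR B := by
    calc ∑ i, p (μ i) ≤ ∑ _i : Fin n, phiR B := Finset.sum_le_sum (fun i _ => (hpbound i).2)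
      _ = n * phiR B := by
        rw [Finset.sum_const, Finset.card_univ, Fintype.card_fin, nsmul_eq_mul]
  have hmub : μb * ∑ i, p (μ i) ≥ -(|μb| * (n * phiR B)) := by
    have h1' : μb * ∑ i, p (μ i) ≥ -(|μb| * ∑ i, p (μ i)) := by
      rcases le_total 0 μb with h | h
      · have : (0:ℝ) ≤ μb * ∑ i, p (μ i) := mul_nonneg h hsump_nonneg
        have : (0:ℝ) ≤ |μb| * ∑ i, p (μ i) := mul_nonneg (abs_nonneg _) hsump_nonneg
        linarith
      · rw [abs_of_nonpos h]; ring_nf; linarith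
    have h2' : |μb| * ∑ i, p (μ i) ≤ |μb| * (n * phiR B) :=
      mul_le_mul_of_nonneg_left hsump_le (abs_nonneg _)
    linarith
  have hL2' : |μb| * (n * phiR B) ≤ (∑ i, (μ i - μb) ^ 2) * m := by
    have : |∑ i, μ i| = n * |μb| := by
      rw [hsummu, abs_mul, abs_of_pos hn']
    rw [this] at hL2
    calc |μb| * (n * phiR B) = (n : ℝ) * |μb| * phiR B := by ring
      _ ≤ _ := hL2
  have final : (0:ℝ) ≤ ∑ i, μ i * p (μ i) := by nlinarith [hsum, expand, hmub, hL2']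
  exact final

lemma Wn_lb (n : ℕ) (μ : Fin n → ℝ) (B : ℝ) (hB : 0 < B)
    (hμB : ∀ i, -B < μ i ∧ μ i < B) (β : ℝ) :
    -(B * PhiR (B - β)) ≤ Wn n μ β := by
  rcases Nat.eq_zero_or_pos n with hn | hn
  · subst hn
    have := mul_nonneg hB.le (PhiR_nonneg (B - β))
    simp [Wn]
    linarith
  have hn' : (0:ℝ) < n := Nat.cast_pos.2 hn
  have hterm : ∀ i : Fin n, -(B * PhiR (B - β)) ≤ μ i * PhiR (μ i - β) := by
    intro i
    have hPn : 0 ≤ PhiR (μ i - β) := PhiR_nonneg _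
    have hPB : 0 ≤ PhiR (B - β) := PhiR_nonneg _
    rcases le_total 0 (μ i) with h | h
    · nlinarith [mul_nonneg h hPn, mul_nonneg hB.le hPB]
    · have hle : PhiR (μ i - β) ≤ PhiR (B - β) :=
        (strictMono_PhiR.le_iff_le).2 (by linarith [(hμB i).2])
      nlinarith [(hμB i).1]
  have hsum : (n:ℝ) * -(B * PhiR (B - β)) ≤ ∑ i, μ i * PhiR (μ i - β) := by
    calc (n:ℝ) * -(B * PhiR (B - β)) = ∑ _i : Fin n, -(B * PhiR (B - β)) := by
          rw [Finset.sum_const, Finset.card_univ, Fintype.card_fin, nsmul_eq_mul]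
      _ ≤ _ := Finset.sum_le_sum (fun i _ => hterm i)
  unfold Wn
  have h2 := mul_le_mul_of_nonneg_left hsum (by positivity : (0:ℝ) ≤ 1 / (n:ℝ))
  calc -(B * PhiR (B - β)) = 1 / (n:ℝ) * ((n:ℝ) * -(B * PhiR (B - β))) := by
        rw [← mul_assoc, one_div, inv_mul_cancel₀ hn'.ne', one_mul]
    _ ≤ _ := h2

lemma tendsto_B_PhiR (B : ℝ) (hB : 0 < B) :
    Filter.Tendsto (fun β : ℝ => B * PhiR (B - β)) Filter.atTop (nhds 0) := by
  have hB2 : Filter.Tendsto (fun β : ℝ => B - β) Filter.atTop Filter.atBot := by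
    apply Filter.tendsto_atBot_add_const_left
    exact Filter.tendsto_neg_atTop_atBot
  have hupper : Filter.Tendsto
      (fun β : ℝ => B * ((Real.sqrt (2 * Real.pi))⁻¹ * Real.exp (B - β)))
      Filter.atTop (nhds 0) := by
    have := (Real.tendsto_exp_atBot.comp hB2).const_mul (B * (Real.sqrt (2 * Real.pi))⁻¹)
    simp only [mul_zero] at this
    convert this using 2 with β
    simp [Function.comp]
    ring
  apply tendsto_of_tendsto_of_tendsto_of_le_of_le' tendsto_const_nhds hupper
  · filter_upwards with β
    exact mul_nonneg hB.le (PhiR_nonneg _)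
  · filter_upwards [Filter.eventually_ge_atTop (B + 2)] with β hβ
    have h2 := PhiR_le_exp (x := B - β) (by linarith)
    nlinarith

set_option maxHeartbeats 2000000 in
/-- the low-level conditions (L1)–(L3) imply the fast-rate conditions:
a unique, well-separated, curved interior maximizer of the welfare. -/
theorem low_level_conditions_give_fast_rate (B κ₀ : ℝ) (hB : 0 < B) (hκ : 0 < κ₀) :
    ∃ ξ : ℝ, 0 < ξ ∧
      ∀ (n : ℕ), 0 < n → ∀ μ : Fin n → ℝ,
        -- (L1): −B < min μ_i < 0 and 0 < max μ_i < B
        ((∀ i, -B < μ i ∧ μ i < B) ∧ (∃ i, μ i < 0) ∧ (∃ i, 0 < μ i)) →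
        -- (L2): |μ̄| ≤ σ̄² · m_B / φ(B)
        |(1 / (n:ℝ)) * ∑ i, μ i| ≤
          ((1 / (n:ℝ)) * ∑ i, (μ i - (1 / (n:ℝ)) * ∑ j, μ j) ^ 2) *
            (sInf ((fun t => t * phiR t) '' Set.Icc B (3 * B)) / phiR B) →
        -- (L3): (1/n) Σ μ_i² > κ₀ / φ(3B)
        κ₀ / phiR (3 * B) < (1 / (n:ℝ)) * ∑ i, (μ i) ^ 2 →
        ∃ βs : ℝ, βs ∈ Set.Icc (-(2 * B)) (2 * B) ∧
          (∀ β, Wn n μ β ≤ Wn n μ βs) ∧ 0 < Wn n μ βs ∧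
          (∀ β, IsLocalMax (Wn n μ) β → β = βs) ∧
          deriv (deriv (Wn n μ)) βs < -κ₀ ∧
          ∀ β, κ₀ / B < |β - βs| → Wn n μ β < Wn n μ βs - ξ := by
  have hc0 : (0:ℝ) < (Real.sqrt (2 * Real.pi))⁻¹ :=
    inv_pos.2 (Real.sqrt_pos.2 (by positivity))
  set c0 : ℝ := (Real.sqrt (2 * Real.pi))⁻¹ with hc0def
  have hφ3B : 0 < phiR (3 * B) := phiR_pos _
  set c1 : ℝ := (κ₀ / phiR (3 * B)) * Real.exp (-(B * (2 * B + 1) + B ^ 2 / 2)) with hc1def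
  have hc1 : 0 < c1 := mul_pos (div_pos hκ hφ3B) (Real.exp_pos _)
  set c2 : ℝ := c0 * Real.exp (-((2 * B + 1) ^ 2) / 2) * c1 with hc2def
  have hc2 : 0 < c2 := by positivity
  set δ : ℝ := min (κ₀ / B) 1 with hδdef
  have hδ : 0 < δ := lt_min (div_pos hκ hB) one_pos
  have hδ1 : δ ≤ 1 := min_le_right _ _
  have hδκ : δ ≤ κ₀ / B := min_le_left _ _
  refine ⟨c2 * δ ^ 2 / 4, by positivity, ?_⟩
  intro n hn μ hL1 hL2 hL3
  obtain ⟨hμB, ⟨ineg, hineg⟩, ⟨ipos, hipos⟩⟩ := hL1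
  have hn' : (0:ℝ) < n := Nat.cast_pos.2 hn
  have hμabs : ∀ i, |μ i| ≤ B := fun i => abs_le.2 ⟨(hμB i).1.le, (hμB i).2.le⟩
  set m := sInf ((fun t => t * phiR t) '' Set.Icc B (3 * B)) with hmdef
  have hm_le : ∀ t ∈ Set.Icc B (3 * B), m ≤ t * phiR t := by
    intro t ht
    apply csInf_le
    · refine ⟨0, ?_⟩
      rintro x ⟨u, hu, rfl⟩
      exact mul_nonneg (le_trans hB.le hu.1) (phiR_pos u).le
    · exact ⟨t, ht, rfl⟩
  have hφB : 0 < phiR B := phiR_pos _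
  -- translate (L2)
  have hL2' : |∑ i, μ i| * phiR B ≤ (∑ i, (μ i - (1 / (n:ℝ)) * ∑ j, μ j) ^ 2) * m := by
    set V := ∑ i, (μ i - (1 / (n:ℝ)) * ∑ j, μ j) ^ 2 with hV
    rw [abs_mul, abs_of_pos (by positivity : (0:ℝ) < 1 / (n:ℝ))] at hL2
    have h2 := mul_le_mul_of_nonneg_left hL2 hn'.le
    have h3 : (n:ℝ) * (1 / (n:ℝ) * |∑ i, μ i|) = |∑ i, μ i| := by field_simp
    have h4 : (n:ℝ) * (1 / (n:ℝ) * V * (m / phiR B)) = V * (m / phiR B) := by field_simp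
    rw [h3, h4] at h2
    have h5 := mul_le_mul_of_nonneg_right h2 hφB.le
    have h6 : V * (m / phiR B) * phiR B = V * m := by
      field_simp
    rwa [h6] at h5
  -- (L3) consequences
  have hL3' : (n:ℝ) * (κ₀ / phiR (3 * B)) < ∑ i, μ i ^ 2 := by
    have := mul_lt_mul_of_pos_left hL3 hn'
    calc (n:ℝ) * (κ₀ / phiR (3 * B)) < (n:ℝ) * (1 / (n:ℝ) * ∑ i, μ i ^ 2) := this
      _ = ∑ i, μ i ^ 2 := by field_simp
  -- S facts
  have hSderiv := hasDerivAt_Sfun n μ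
  have hSpos' : ∀ β, 0 < ∑ i, μ i ^ 2 * Real.exp (μ i * β - μ i ^ 2 / 2) := by
    intro β
    apply Finset.sum_pos' (fun i _ => by positivity)
    exact ⟨ipos, Finset.mem_univ _,
      mul_pos (by nlinarith [hipos]) (Real.exp_pos _)⟩
  have hSmono : StrictMono (Sfun n μ) :=
    strictMono_of_deriv_pos (fun β => by rw [(hSderiv β).deriv]; exact hSpos' β)
  have hSdiff : Differentiable ℝ (Sfun n μ) := fun β => (hSderiv β).differentiableAt
  have hScont : Continuous (Sfun n μ) := hSdiff.continuous
  -- endpoints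
  have hS2B : 0 ≤ Sfun n μ (2 * B) := by
    have h0 := cheb n hn μ B m hB hμabs hm_le hL2'
    rw [sum_phiR_eq n μ (2 * B)] at h0
    have ha : (0:ℝ) < (Real.sqrt (2 * Real.pi))⁻¹ * Real.exp (-((2 * B) ^ 2) / 2) := by positivity
    exact (mul_nonneg_iff_of_pos_left ha).1 h0
  have hSm2B : Sfun n μ (-(2 * B)) ≤ 0 := by
    set ν : Fin n → ℝ := fun i => -μ i with hν
    have hν1 : ∀ i, |ν i| ≤ B := fun i => by rw [hν]; rw [abs_neg]; exact hμabs i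
    have hνsum : ∑ i, ν i = -∑ i, μ i := by simp [hν]
    have hνL2 : |∑ i, ν i| * phiR B ≤ (∑ i, (ν i - (1 / (n:ℝ)) * ∑ j, ν j) ^ 2) * m := by
      have heq : ∀ i : Fin n, (ν i - (1 / (n:ℝ)) * ∑ j, ν j) ^ 2 =
          (μ i - (1 / (n:ℝ)) * ∑ j, μ j) ^ 2 := by
        intro i
        rw [hνsum]
        simp only [hν]
        ring
      rw [Finset.sum_congr rfl (fun i _ => heq i), hνsum, abs_neg]
      exact hL2'
    have h0 := cheb n hn ν B m hB hν1 hm_le hνL2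
    have heq2 : ∑ i, ν i * phiR (ν i - 2 * B) = -∑ i, μ i * phiR (μ i - -(2 * B)) := by
      rw [← Finset.sum_neg_distrib]
      apply Finset.sum_congr rfl
      intro i _
      have h3 : ν i - 2 * B = -(μ i - -(2 * B)) := by simp only [hν]; ring
      rw [h3, phiR_neg_arg]
      simp only [hν]
      ring
    rw [heq2] at h0
    have h1 : ∑ i, μ i * phiR (μ i - -(2 * B)) ≤ 0 := by linarith
    rw [sum_phiR_eq n μ (-(2 * B))] at h1
    have ha : (0:ℝ) < (Real.sqrt (2 * Real.pi))⁻¹ * Real.exp (-((-(2 * B)) ^ 2) / 2) := by positivity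
    by_contra hcon
    push_neg at hcon
    nlinarith [mul_pos ha hcon]
  -- the maximizer
  obtain ⟨βs, hβs_mem, hβs_zero⟩ : ∃ βs ∈ Set.Icc (-(2 * B)) (2 * B), Sfun n μ βs = 0 := by
    have hsub := intermediate_value_Icc (by linarith : -(2 * B) ≤ 2 * B) hScont.continuousOn
    obtain ⟨βs, hmem, heq⟩ := hsub (⟨hSm2B, hS2B⟩ : (0:ℝ) ∈ Set.Icc (Sfun n μ (-(2 * B))) (Sfun n μ (2 * B)))
    exact ⟨βs, hmem, heq⟩
  obtain ⟨hβs_lb, hβs_ub⟩ := hβs_mem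
  -- sign of the first derivative
  have hW1pos : ∀ β < βs, 0 < W1 n μ β := by
    intro β hβ
    have hS : Sfun n μ β < 0 := hβs_zero ▸ hSmono hβ
    rw [W1_eq]
    have he : (0:ℝ) < Real.exp (-(β ^ 2) / 2) := Real.exp_pos _
    have : (Real.sqrt (2 * Real.pi))⁻¹ * Real.exp (-(β ^ 2) / 2) * Sfun n μ β < 0 := by
      apply mul_neg_of_pos_of_neg (by positivity) hS
    have hn2 : (0:ℝ) < 1 / (n:ℝ) := by positivity
    linarith [mul_pos hn2 (neg_pos.2 this)]
  have hW1neg : ∀ β, βs < β → W1 n μ β < 0 := by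
    intro β hβ
    have hS : 0 < Sfun n μ β := hβs_zero ▸ hSmono hβ
    rw [W1_eq]
    have : 0 < (Real.sqrt (2 * Real.pi))⁻¹ * Real.exp (-(β ^ 2) / 2) * Sfun n μ β := by
      apply mul_pos (by positivity) hS
    have hn2 : (0:ℝ) < 1 / (n:ℝ) := by positivity
    linarith [mul_pos hn2 this]
  have hWdiff : Differentiable ℝ (Wn n μ) := fun β => (hasDerivAt_Wn n μ β).differentiableAt
  have hWmono : StrictMonoOn (Wn n μ) (Set.Iic βs) := by
    apply strictMonoOn_of_deriv_pos (convex_Iic βs) hWdiff.continuous.continuousOn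
    intro x hx
    rw [interior_Iic] at hx
    rw [deriv_Wn]
    exact hW1pos x hx
  have hWanti : StrictAntiOn (Wn n μ) (Set.Ici βs) := by
    apply strictAntiOn_of_deriv_neg (convex_Ici βs) hWdiff.continuous.continuousOn
    intro x hx
    rw [interior_Ici] at hx
    rw [deriv_Wn]
    exact hW1neg x hx
  have hmax : ∀ β, Wn n μ β ≤ Wn n μ βs := by
    intro β
    rcases lt_trichotomy β βs with h | h | h
    · exact (hWmono (Set.mem_Iic.2 h.le) (Set.mem_Iic.2 le_rfl) h).le
    · rw [h]
    · exact (hWanti (Set.mem_Ici.2 le_rfl) (Set.mem_Ici.2 h.le) h).le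
  -- positivity of the max
  have hWpos1 : 0 ≤ Wn n μ (βs + 1) := by
    by_contra hneg
    push_neg at hneg
    have hT := tendsto_B_PhiR B hB
    have hev := (hT.eventually_lt_const (neg_pos.2 hneg : (0:ℝ) < -Wn n μ (βs + 1))).and
      (Filter.eventually_ge_atTop (βs + 1))
    obtain ⟨β, hβ1, hβ2⟩ := hev.exists
    have hle : Wn n μ β ≤ Wn n μ (βs + 1) := by
      rcases eq_or_lt_of_le hβ2 with h | h
      · rw [← h]
      · exact (hWanti (Set.mem_Ici.2 (by linarith)) (Set.mem_Ici.2 (by linarith)) h).le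
    have := Wn_lb n μ B hB hμB β
    linarith
  have hWpos : 0 < Wn n μ βs := by
    have := hWanti (Set.mem_Ici.2 le_rfl) (Set.mem_Ici.2 (by linarith : βs ≤ βs + 1))
      (lt_add_one βs)
    linarith
  -- unique local max
  have huniq : ∀ β, IsLocalMax (Wn n μ) β → β = βs := by
    intro β hlm
    by_contra hne
    rcases lt_or_gt_of_ne hne with h | h
    · have h1 : ∀ᶠ y in 𝓝[>] β, Wn n μ y ≤ Wn n μ β := hlm.filter_mono nhdsWithin_le_nhds
      have h2 : Set.Ioo β βs ∈ 𝓝[>] β := Ioo_mem_nhdsGT_of_mem ⟨le_rfl, h⟩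
      obtain ⟨y, hWy, hy⟩ := (h1.and (eventually_of_mem h2 (fun y hy => hy))).exists
      have : Wn n μ β < Wn n μ y :=
        hWmono (Set.mem_Iic.2 (by linarith [hy.2])) (Set.mem_Iic.2 hy.2.le) hy.1
      linarith
    · have h1 : ∀ᶠ y in 𝓝[<] β, Wn n μ y ≤ Wn n μ β := hlm.filter_mono nhdsWithin_le_nhds
      have h2 : Set.Ioo βs β ∈ 𝓝[<] β := Ioo_mem_nhdsLT_of_mem ⟨h, le_rfl⟩
      obtain ⟨y, hWy, hy⟩ := (h1.and (eventually_of_mem h2 (fun y hy => hy))).exists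
      have : Wn n μ β < Wn n μ y :=
        hWanti (Set.mem_Ici.2 hy.1.le) (Set.mem_Ici.2 (by linarith [hy.1])) hy.2
      linarith
  -- second derivative
  have hzero : ∑ i, μ i * phiR (μ i - βs) = 0 := by
    rw [sum_phiR_eq, hβs_zero, mul_zero]
  have hcurv : deriv (deriv (Wn n μ)) βs < -κ₀ := by
    rw [deriv_Wn, (hasDerivAt_W1 n μ βs).deriv]
    have hsplit : ∑ i, μ i * ((μ i - βs) * phiR (μ i - βs)) =
        ∑ i, μ i ^ 2 * phiR (μ i - βs) - βs * ∑ i, μ i * phiR (μ i - βs) := by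
      rw [Finset.mul_sum, ← Finset.sum_sub_distrib]
      exact Finset.sum_congr rfl (fun i _ => by ring)
    rw [hsplit, hzero, mul_zero, sub_zero]
    have hbound : ∀ i : Fin n, μ i ^ 2 * phiR (3 * B) ≤ μ i ^ 2 * phiR (μ i - βs) := by
      intro i
      apply mul_le_mul_of_nonneg_left _ (sq_nonneg _)
      apply phiR_le_phiR
      rw [abs_of_pos (by linarith : (0:ℝ) < 3 * B)]
      have h1 := hμabs i
      rw [abs_le] at h1 ⊢
      constructor <;> [linarith [h1.1, hβs_ub]; linarith [h1.2, hβs_lb]]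
    have hsumb : phiR (3 * B) * ∑ i, μ i ^ 2 ≤ ∑ i, μ i ^ 2 * phiR (μ i - βs) := by
      rw [Finset.mul_sum]
      exact Finset.sum_le_sum (fun i _ => by rw [mul_comm]; exact hbound i)
    have hkey : phiR (3 * B) * (κ₀ / phiR (3 * B)) = κ₀ := mul_div_cancel₀ _ hφ3B.ne'
    have hn2 : (0:ℝ) < 1 / (n:ℝ) := by positivity
    have h9 : κ₀ < 1 / (n:ℝ) * ∑ i, μ i ^ 2 * phiR (μ i - βs) := by
      have h8 : (n:ℝ) * κ₀ < phiR (3 * B) * ∑ i, μ i ^ 2 := by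
        have := mul_lt_mul_of_pos_left hL3' hφ3B
        calc (n:ℝ) * κ₀ = phiR (3 * B) * ((n:ℝ) * (κ₀ / phiR (3 * B))) := by
              field_simp
          _ < _ := this
      calc κ₀ = 1 / (n:ℝ) * ((n:ℝ) * κ₀) := by field_simp
        _ < 1 / (n:ℝ) * (phiR (3 * B) * ∑ i, μ i ^ 2) := by
            apply mul_lt_mul_of_pos_left h8 hn2
        _ ≤ _ := mul_le_mul_of_nonneg_left hsumb hn2.le
    linarith
  -- uniform lower bound on |S| near βs
  have hβs_abs : |βs| ≤ 2 * B := abs_le.2 ⟨by linarith, hβs_ub⟩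
  have hSmono2 : MonotoneOn (fun u => Sfun n μ u - (n:ℝ) * c1 * u)
      (Set.Icc (βs - δ) (βs + δ)) := by
    apply monotoneOn_of_deriv_nonneg (convex_Icc _ _)
    · exact (hScont.sub (continuous_const.mul continuous_id)).continuousOn
    · intro x _
      have hlin : HasDerivAt (fun u : ℝ => (n:ℝ) * c1 * u) ((n:ℝ) * c1) x := by
        simpa using (hasDerivAt_id x).const_mul ((n:ℝ) * c1)
      exact ((hSderiv x).sub hlin).differentiableAt.differentiableWithinAt
    · intro x hx
      rw [interior_Icc] at hx
      have hlin : HasDerivAt (fun u : ℝ => (n:ℝ) * c1 * u) ((n:ℝ) * c1) x := by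
        simpa using (hasDerivAt_id x).const_mul ((n:ℝ) * c1)
      have hd : deriv (fun u => Sfun n μ u - (n:ℝ) * c1 * u) x =
          (∑ i, μ i ^ 2 * Real.exp (μ i * x - μ i ^ 2 / 2)) - (n:ℝ) * c1 := by
        have := ((hSderiv x).fun_sub hlin).deriv
        simpa using this
      rw [hd, sub_nonneg]
      have hxabs : |x| ≤ 2 * B + 1 := by
        rw [abs_le]
        constructor <;> [linarith [hx.1.le, hδ1]; linarith [hx.2.le, hδ1]]
      have hterm : ∀ i : Fin n,
          μ i ^ 2 * Real.exp (-(B * (2 * B + 1) + B ^ 2 / 2)) ≤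
          μ i ^ 2 * Real.exp (μ i * x - μ i ^ 2 / 2) := by
        intro i
        apply mul_le_mul_of_nonneg_left _ (sq_nonneg _)
        apply Real.exp_le_exp.2
        have h1 := abs_le.1 (hμabs i)
        have h2 := abs_le.1 hxabs
        nlinarith [h1.1, h1.2, h2.1, h2.2, hB]
      calc (n:ℝ) * c1 = (n:ℝ) * (κ₀ / phiR (3 * B)) * Real.exp (-(B * (2 * B + 1) + B ^ 2 / 2)) := by
            rw [hc1def]; ring
        _ ≤ (∑ i, μ i ^ 2) * Real.exp (-(B * (2 * B + 1) + B ^ 2 / 2)) :=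
            mul_le_mul_of_nonneg_right hL3'.le (Real.exp_pos _).le
        _ = ∑ i, μ i ^ 2 * Real.exp (-(B * (2 * B + 1) + B ^ 2 / 2)) := by
            rw [Finset.sum_mul]
        _ ≤ _ := Finset.sum_le_sum (fun i _ => hterm i)
  have hSlb : ∀ u ∈ Set.Icc βs (βs + δ), (n:ℝ) * c1 * (u - βs) ≤ Sfun n μ u := by
    intro u hu
    have h1 := hSmono2 (Set.mem_Icc.2 ⟨by linarith [hδ.le], by linarith [hδ.le]⟩)
      (Set.mem_Icc.2 ⟨by linarith [hu.1, hδ.le], hu.2⟩) hu.1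
    simp only at h1
    rw [hβs_zero] at h1
    linarith
  have hSub : ∀ u ∈ Set.Icc (βs - δ) βs, Sfun n μ u ≤ (n:ℝ) * c1 * (u - βs) := by
    intro u hu
    have h1 := hSmono2 (Set.mem_Icc.2 ⟨hu.1, by linarith [hu.2, hδ.le]⟩)
      (Set.mem_Icc.2 ⟨by linarith [hδ.le], by linarith [hδ.le]⟩) hu.2
    simp only at h1
    rw [hβs_zero] at h1
    linarith
  -- derivative lower bounds near βs
  have habs_bd : ∀ t ∈ Set.Icc (0:ℝ) δ, (βs + t) ^ 2 ≤ (2 * B + 1) ^ 2 ∧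
      (βs - t) ^ 2 ≤ (2 * B + 1) ^ 2 := by
    intro t ht
    have h1 := abs_le.1 hβs_abs
    constructor <;> nlinarith [ht.1, ht.2, hδ1, hB]
  have hW1low : ∀ t ∈ Set.Icc (0:ℝ) δ, c2 * t ≤ -(W1 n μ (βs + t)) := by
    intro t ht
    have hS := hSlb (βs + t) (Set.mem_Icc.2 ⟨by linarith [ht.1], by linarith [ht.2]⟩)
    rw [add_sub_cancel_left] at hS
    rw [W1_eq, neg_neg]
    have hexp : Real.exp (-((2 * B + 1) ^ 2) / 2) ≤ Real.exp (-((βs + t) ^ 2) / 2) :=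
      Real.exp_le_exp.2 (by linarith [(habs_bd t ht).1])
    have htn : (0:ℝ) ≤ (n:ℝ) * c1 * t := mul_nonneg (by positivity) ht.1
    have hSnn : 0 ≤ Sfun n μ (βs + t) := le_trans htn (by simpa using hS)
    have hn2 : (0:ℝ) < 1 / (n:ℝ) := by positivity
    have key : c0 * Real.exp (-((2 * B + 1) ^ 2) / 2) * ((n:ℝ) * c1 * t) ≤
        c0 * Real.exp (-((βs + t) ^ 2) / 2) * Sfun n μ (βs + t) := by
      apply mul_le_mul
      · exact mul_le_mul_of_nonneg_left hexp hc0.le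
      · simpa using hS
      · exact htn
      · positivity
    calc c2 * t = 1 / (n:ℝ) * (c0 * Real.exp (-((2 * B + 1) ^ 2) / 2) * ((n:ℝ) * c1 * t)) := by
          rw [hc2def]; field_simp
      _ ≤ _ := mul_le_mul_of_nonneg_left key hn2.le
  have hW1low' : ∀ t ∈ Set.Icc (0:ℝ) δ, c2 * t ≤ W1 n μ (βs - t) := by
    intro t ht
    have hS := hSub (βs - t) (Set.mem_Icc.2 ⟨by linarith [ht.2], by linarith [ht.1]⟩)
    have hS2 : (n:ℝ) * c1 * t ≤ -Sfun n μ (βs - t) := by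
      have : βs - t - βs = -t := by ring
      rw [this] at hS
      linarith [hS]
    rw [W1_eq]
    have hexp : Real.exp (-((2 * B + 1) ^ 2) / 2) ≤ Real.exp (-((βs - t) ^ 2) / 2) :=
      Real.exp_le_exp.2 (by linarith [(habs_bd t ht).2])
    have hn2 : (0:ℝ) < 1 / (n:ℝ) := by positivity
    have key : c0 * Real.exp (-((2 * B + 1) ^ 2) / 2) * ((n:ℝ) * c1 * t) ≤
        c0 * Real.exp (-((βs - t) ^ 2) / 2) * (-Sfun n μ (βs - t)) := by
      apply mul_le_mul
      · exact mul_le_mul_of_nonneg_left hexp hc0.le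
      · exact hS2
      · exact mul_nonneg (by positivity) ht.1
      · positivity
    calc c2 * t = 1 / (n:ℝ) * (c0 * Real.exp (-((2 * B + 1) ^ 2) / 2) * ((n:ℝ) * c1 * t)) := by
          rw [hc2def]; field_simp
      _ ≤ 1 / (n:ℝ) * (c0 * Real.exp (-((βs - t) ^ 2) / 2) * (-Sfun n μ (βs - t))) :=
          mul_le_mul_of_nonneg_left key hn2.le
      _ = -(1 / (n:ℝ) * (c0 * Real.exp (-((βs - t) ^ 2) / 2) * Sfun n μ (βs - t))) := by ring
  -- quadratic gap on both sides
  have hgap_right : Wn n μ (βs + δ) ≤ Wn n μ βs - c2 * δ ^ 2 / 2 := by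
    set F : ℝ → ℝ := fun t => Wn n μ βs - Wn n μ (βs + t) - c2 / 2 * t ^ 2 with hF
    have hFd : ∀ t : ℝ, HasDerivAt F (-(W1 n μ (βs + t)) - c2 * t) t := by
      intro t
      have h1 : HasDerivAt (fun t => Wn n μ (βs + t)) (W1 n μ (βs + t)) t := by
        have := (hasDerivAt_Wn n μ (βs + t)).comp t
          ((hasDerivAt_const t βs).fun_add (hasDerivAt_id t))
        simpa [Function.comp_def] using this
      have h2 := ((hasDerivAt_const t (Wn n μ βs)).fun_sub h1).fun_sub
        ((hasDerivAt_pow 2 t).const_mul (c2 / 2))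
      exact h2.congr_deriv (by push_cast; ring)
    have hFmono : MonotoneOn F (Set.Icc 0 δ) := by
      apply monotoneOn_of_deriv_nonneg (convex_Icc _ _)
      · exact (Continuous.continuousOn (by
          exact ((continuous_const.sub (hWdiff.continuous.comp
            (continuous_const.add continuous_id))).sub
            (continuous_const.mul (continuous_pow 2)))))
      · intro x _
        exact (hFd x).differentiableAt.differentiableWithinAt
      · intro x hx
        rw [interior_Icc] at hx
        rw [(hFd x).deriv, sub_nonneg]
        exact le_trans (le_refl _) (by
          have := hW1low x (Set.mem_Icc.2 ⟨hx.1.le, hx.2.le⟩)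
          linarith)
    have h0δ := hFmono (Set.mem_Icc.2 ⟨le_rfl, hδ.le⟩) (Set.mem_Icc.2 ⟨hδ.le, le_rfl⟩) hδ.le
    simp only [hF, add_zero] at h0δ
    nlinarith [h0δ]
  have hgap_left : Wn n μ (βs - δ) ≤ Wn n μ βs - c2 * δ ^ 2 / 2 := by
    set F : ℝ → ℝ := fun t => Wn n μ βs - Wn n μ (βs - t) - c2 / 2 * t ^ 2 with hF
    have hFd : ∀ t : ℝ, HasDerivAt F (W1 n μ (βs - t) - c2 * t) t := by
      intro t
      have h1 : HasDerivAt (fun t => Wn n μ (βs - t)) (-W1 n μ (βs - t)) t := by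
        have := (hasDerivAt_Wn n μ (βs - t)).comp t
          ((hasDerivAt_const t βs).fun_sub (hasDerivAt_id t))
        simpa [Function.comp_def] using this
      have h2 := ((hasDerivAt_const t (Wn n μ βs)).fun_sub h1).fun_sub
        ((hasDerivAt_pow 2 t).const_mul (c2 / 2))
      exact h2.congr_deriv (by push_cast; ring)
    have hFmono : MonotoneOn F (Set.Icc 0 δ) := by
      apply monotoneOn_of_deriv_nonneg (convex_Icc _ _)
      · exact (Continuous.continuousOn (by
          exact ((continuous_const.sub (hWdiff.continuous.comp
            (continuous_const.sub continuous_id))).sub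
            (continuous_const.mul (continuous_pow 2)))))
      · intro x _
        exact (hFd x).differentiableAt.differentiableWithinAt
      · intro x hx
        rw [interior_Icc] at hx
        rw [(hFd x).deriv, sub_nonneg]
        have := hW1low' x (Set.mem_Icc.2 ⟨hx.1.le, hx.2.le⟩)
        linarith
    have h0δ := hFmono (Set.mem_Icc.2 ⟨le_rfl, hδ.le⟩) (Set.mem_Icc.2 ⟨hδ.le, le_rfl⟩) hδ.le
    simp only [hF, sub_zero] at h0δ
    nlinarith [h0δ]
  refine ⟨βs, ⟨hβs_lb, hβs_ub⟩, hmax, hWpos, huniq, hcurv, ?_⟩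
  intro β hβ
  have hξ : c2 * δ ^ 2 / 4 < c2 * δ ^ 2 / 2 := by nlinarith [mul_pos hc2 (pow_pos hδ 2)]
  rcases lt_or_ge β βs with h | h
  · have h2 : β < βs - δ := by
      have : βs - β = |β - βs| := by rw [abs_sub_comm, abs_of_pos (by linarith)]
      have hgt : κ₀ / B < βs - β := by rw [this]; exact hβ
      linarith [hδκ]
    have h3 : Wn n μ β < Wn n μ (βs - δ) :=
      hWmono (Set.mem_Iic.2 (by linarith)) (Set.mem_Iic.2 (by linarith [hδ.le])) h2
    linarith [hgap_left]
  · have h1 : βs < β := by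
      rcases eq_or_lt_of_le h with h' | h'
      · exfalso; rw [← h'] at hβ; simp at hβ; linarith [div_pos hκ hB]
      · exact h'
    have h2 : βs + δ < β := by
      have : β - βs = |β - βs| := by rw [abs_of_pos (by linarith)]
      have hgt : κ₀ / B < β - βs := by rw [this]; exact hβ
      linarith [hδκ]
    have h3 : Wn n μ β < Wn n μ (βs + δ) := by
      exact hWanti (Set.mem_Ici.2 (by linarith [hδ.le])) (Set.mem_Ici.2 (by linarith)) h2
    linarith [hgap_right]
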